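/- Let ε, δ ∈ (0,1), let I and D be natural numbers, and set b = 1 + (εδ/2)². Let C_I be distributed according to morris(b, I) and C_D according to morris(b, D), independently, and let ñ = [(b^{C_I} − b)/(b − 1) + 1] − [(b^{C_D} − b)/(b − 1) + 1]. Then with probability at least 1 − δ, |ñ − (I − D)| ≤ ε(I + D). -/

import Mathlib

open scoped ENNReal
open MeasureTheory

/-- A coin flip returning `true` with probability `min p 1`. -/
noncomputable def coin (p : ℝ≥0∞) : PMF Bool := PMF.ofFintype (fun b => cond b (min p 1) (1 - min p 1))
  (by rw [Fintype.sum_bool]; exact add_tsub_cancel_of_le (min_le_right p 1))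

/-- The Morris counter distribution with base `b` after `n` increments: starting from `0`,
each increment raises a counter `c` to `c + 1` with probability `b ^ (-c)`. -/
noncomputable def morris (b : ℝ) : ℕ → PMF ℕ
  | 0 => PMF.pure 0
  | n + 1 => (morris b n).bind fun c =>
      (coin (ENNReal.ofReal (b ^ (-(c : ℝ))))).bind fun h =>
        PMF.pure (if h then c + 1 else c)

lemma exp_pure {α : Type*} (a : α) (f : α → ℝ≥0∞) :
    ∑' c, (PMF.pure a) c * f c = f a := by
  rw [tsum_eq_single a]
  · simp [PMF.pure_apply]
  · intro c hc; simp [PMF.pure_apply, hc]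

lemma exp_bind {α β : Type*} (p : PMF α) (g : α → PMF β) (f : β → ℝ≥0∞) :
    ∑' c, (p.bind g) c * f c = ∑' a, p a * ∑' c, g a c * f c := by
  simp only [PMF.bind_apply]
  calc ∑' c, (∑' a, p a * g a c) * f c
      = ∑' c, ∑' a, p a * g a c * f c := by
        congr 1; ext c; rw [ENNReal.tsum_mul_right]
    _ = ∑' a, ∑' c, p a * g a c * f c := ENNReal.tsum_comm
    _ = ∑' a, p a * ∑' c, g a c * f c := by
        congr 1; ext a
        rw [← ENNReal.tsum_mul_left]
        congr 1; ext c; ring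

lemma morris_supp (b : ℝ) (n : ℕ) : ∀ c ∈ (morris b n).support, c ≤ n := by
  induction n with
  | zero => intro c hc; simp [morris, PMF.support_pure] at hc; simp [hc]
  | succ n ih =>
    intro c hc
    rw [morris, PMF.support_bind] at hc
    simp only [Set.mem_iUnion] at hc
    obtain ⟨a, ha, hc⟩ := hc
    rw [PMF.support_bind] at hc
    simp only [Set.mem_iUnion] at hc
    obtain ⟨h, _, hc⟩ := hc
    rw [PMF.support_pure] at hc
    have := ih a ha
    rw [Set.mem_singleton_iff] at hc
    subst hc
    split <;> omega

section moments
variable {b : ℝ}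

lemma rpow_eq_inv (hb1 : 1 ≤ b) (a : ℕ) : b ^ (-(a:ℝ)) = (b ^ a)⁻¹ := by
  have hb0 : (0:ℝ) ≤ b := le_trans zero_le_one hb1
  rw [Real.rpow_neg hb0, Real.rpow_natCast]

lemma pow_ge_one (hb1 : 1 ≤ b) (a : ℕ) : (1:ℝ) ≤ b ^ a := one_le_pow₀ hb1

lemma inv_le_one'' (hb1 : 1 ≤ b) (a : ℕ) : (b ^ a)⁻¹ ≤ 1 :=
  inv_le_one_of_one_le₀ (pow_ge_one hb1 a)

lemma inv_nonneg' (hb1 : 1 ≤ b) (a : ℕ) : (0:ℝ) ≤ (b ^ a)⁻¹ := by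
  have := pow_ge_one hb1 a; positivity

lemma step_exp (hb1 : 1 ≤ b) (a : ℕ) (f : ℕ → ℝ≥0∞) :
    ∑' c, ((coin (ENNReal.ofReal (b ^ (-(a : ℝ))))).bind fun h =>
        PMF.pure (if h then a + 1 else a)) c * f c
      = ENNReal.ofReal ((b ^ a)⁻¹) * f (a + 1)
        + ENNReal.ofReal (1 - (b ^ a)⁻¹) * f a := by
  rw [exp_bind, tsum_bool, exp_pure, exp_pure, rpow_eq_inv hb1]
  have hmin : min (ENNReal.ofReal ((b ^ a)⁻¹)) 1 = ENNReal.ofReal ((b ^ a)⁻¹) :=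
    min_eq_left (ENNReal.ofReal_le_one.mpr (inv_le_one'' hb1 a))
  have h1 : (1 : ℝ≥0∞) - ENNReal.ofReal ((b ^ a)⁻¹) = ENNReal.ofReal (1 - (b ^ a)⁻¹) := by
    rw [ENNReal.ofReal_sub 1 (inv_nonneg' hb1 a), ENNReal.ofReal_one]
  simp only [coin, PMF.ofFintype_apply, cond_false, cond_true, hmin, h1, if_true,
    if_neg Bool.false_ne_true]
  ring

lemma moment1 (hb1 : 1 ≤ b) (n : ℕ) :
    ∑' c, (morris b n) c * ENNReal.ofReal (b ^ c) = 1 + n * ENNReal.ofReal (b - 1) := by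
  have hb0 : (0:ℝ) ≤ b := le_trans zero_le_one hb1
  induction n with
  | zero =>
    rw [show morris b 0 = PMF.pure 0 from rfl, exp_pure]
    simp
  | succ n ih =>
    rw [morris, exp_bind]
    have key : ∀ a : ℕ, (∑' c, ((coin (ENNReal.ofReal (b ^ (-(a : ℝ))))).bind fun h =>
        PMF.pure (if h then a + 1 else a)) c * ENNReal.ofReal (b ^ c))
        = ENNReal.ofReal (b ^ a) + ENNReal.ofReal (b - 1) := by
      intro a
      rw [step_exp hb1]
      rw [← ENNReal.ofReal_mul (inv_nonneg' hb1 a), ← ENNReal.ofReal_mul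
        (by nlinarith [pow_ge_one hb1 a, inv_le_one'' hb1 a] : (0:ℝ) ≤ 1 - (b ^ a)⁻¹)]
      rw [← ENNReal.ofReal_add (by nlinarith [pow_ge_one hb1 (a+1), inv_nonneg' hb1 a]) (by
        nlinarith [pow_ge_one hb1 a, inv_le_one'' hb1 a, inv_nonneg' hb1 a])]
      rw [← ENNReal.ofReal_add (by nlinarith [pow_ge_one hb1 a]) (by linarith)]
      congr 1
      have hba : (b:ℝ) ^ a ≠ 0 := by nlinarith [pow_ge_one hb1 a]
      field_simp
      ring
    simp only [key]
    calc ∑' a, (morris b n) a * (ENNReal.ofReal (b ^ a) + ENNReal.ofReal (b - 1))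
        = (∑' a, (morris b n) a * ENNReal.ofReal (b ^ a))
          + ∑' a, (morris b n) a * ENNReal.ofReal (b - 1) := by
          rw [← ENNReal.tsum_add]; congr 1; ext a; ring
      _ = (1 + n * ENNReal.ofReal (b - 1)) + ENNReal.ofReal (b - 1) := by
          rw [ih, ENNReal.tsum_mul_right, PMF.tsum_coe, one_mul]
      _ = 1 + (n + 1 : ℕ) * ENNReal.ofReal (b - 1) := by
          push_cast; ring
end moments

section moment2
variable {b : ℝ}

lemma moment2 (hb1 : 1 ≤ b) (n : ℕ) :
    ∑' c, (morris b n) c * ENNReal.ofReal ((b ^ c) ^ 2)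
      = 1 + n * ENNReal.ofReal (b ^ 2 - 1)
        + (n.choose 2) * (ENNReal.ofReal (b ^ 2 - 1) * ENNReal.ofReal (b - 1)) := by
  induction n with
  | zero =>
    rw [show morris b 0 = PMF.pure 0 from rfl, exp_pure]
    simp
  | succ n ih =>
    rw [morris, exp_bind]
    have key : ∀ a : ℕ, (∑' c, ((coin (ENNReal.ofReal (b ^ (-(a : ℝ))))).bind fun h =>
        PMF.pure (if h then a + 1 else a)) c * ENNReal.ofReal ((b ^ c) ^ 2))
        = ENNReal.ofReal ((b ^ a) ^ 2) + ENNReal.ofReal (b ^ a) * ENNReal.ofReal (b ^ 2 - 1) := by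
      intro a
      rw [step_exp hb1]
      have h1 : (1:ℝ) ≤ b ^ a := pow_ge_one hb1 a
      have h2 : (1:ℝ) ≤ b ^ (a+1) := pow_ge_one hb1 (a+1)
      have hq0 : (0:ℝ) ≤ (b ^ a)⁻¹ := inv_nonneg' hb1 a
      have hq1 : (b ^ a)⁻¹ ≤ 1 := inv_le_one'' hb1 a
      have hba : (b:ℝ) ^ a ≠ 0 := by nlinarith
      have hbb : (1:ℝ) ≤ b ^ 2 := by nlinarith
      rw [← ENNReal.ofReal_mul hq0,
        ← ENNReal.ofReal_mul (by nlinarith : (0:ℝ) ≤ 1 - (b ^ a)⁻¹),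
        ← ENNReal.ofReal_mul (by nlinarith : (0:ℝ) ≤ b ^ a),
        ← ENNReal.ofReal_add (by nlinarith) (by nlinarith),
        ← ENNReal.ofReal_add (by nlinarith) (by nlinarith)]
      congr 1
      field_simp
      ring
    simp only [key]
    have split : ∑' a, (morris b n) a *
        (ENNReal.ofReal ((b ^ a) ^ 2) + ENNReal.ofReal (b ^ a) * ENNReal.ofReal (b ^ 2 - 1))
        = (∑' a, (morris b n) a * ENNReal.ofReal ((b ^ a) ^ 2))
          + ENNReal.ofReal (b ^ 2 - 1) * ∑' a, (morris b n) a * ENNReal.ofReal (b ^ a) := by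
      rw [← ENNReal.tsum_mul_left, ← ENNReal.tsum_add]
      congr 1; ext a; ring
    rw [split, ih, moment1 hb1]
    have hch : (((n+1).choose 2 : ℕ) : ℝ≥0∞) = (n.choose 2 : ℕ) + (n : ℕ) := by
      rw [Nat.choose_succ_succ]
      push_cast [Nat.choose_one_right]
      ring
    rw [hch]
    push_cast
    ring
end moment2

section realsums
variable {b : ℝ}

lemma morris_zero_of_gt (b : ℝ) {n c : ℕ} (h : n < c) : (morris b n) c = 0 := by
  rw [PMF.apply_eq_zero_iff]
  intro hc
  exact absurd (morris_supp b n c hc) (by omega)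

lemma toReal_exp (n : ℕ) (f : ℕ → ℝ) (hf : ∀ c, 0 ≤ f c) :
    ∑ c ∈ Finset.range (n+1), ((morris b n) c).toReal * f c
      = (∑' c, (morris b n) c * ENNReal.ofReal (f c)).toReal := by
  rw [tsum_eq_sum (s := Finset.range (n+1)) (fun c hc => by
    rw [morris_zero_of_gt b (by simpa using hc), zero_mul])]
  rw [ENNReal.toReal_sum (fun c _ => ENNReal.mul_ne_top (PMF.apply_ne_top _ _)
    ENNReal.ofReal_ne_top)]
  exact Finset.sum_congr rfl fun c _ => by
    rw [ENNReal.toReal_mul, ENNReal.toReal_ofReal (hf c)]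

lemma real_sum0 (n : ℕ) :
    ∑ c ∈ Finset.range (n+1), ((morris b n) c).toReal = 1 := by
  have h := toReal_exp (b := b) n (fun _ => 1) (fun _ => zero_le_one)
  simp only [mul_one, ENNReal.ofReal_one] at h
  rw [h, PMF.tsum_coe, ENNReal.toReal_one]

lemma real_sum1 (hb1 : 1 ≤ b) (n : ℕ) :
    ∑ c ∈ Finset.range (n+1), ((morris b n) c).toReal * b ^ c = 1 + (b - 1) * n := by
  have h := toReal_exp (b := b) n (fun c => b ^ c) (fun c => by positivity)
  rw [h, moment1 hb1]
  rw [ENNReal.toReal_add ENNReal.one_ne_top (ENNReal.mul_ne_top (ENNReal.natCast_ne_top n)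
    ENNReal.ofReal_ne_top)]
  rw [ENNReal.toReal_mul, ENNReal.toReal_ofReal (by linarith), ENNReal.toReal_one]
  simp [mul_comm]

lemma real_sum2 (hb1 : 1 ≤ b) (n : ℕ) :
    ∑ c ∈ Finset.range (n+1), ((morris b n) c).toReal * (b ^ c) ^ 2
      = 1 + (b ^ 2 - 1) * n + (b ^ 2 - 1) * (b - 1) * (n.choose 2 : ℕ) := by
  have hb2 : (1:ℝ) ≤ b ^ 2 := by nlinarith
  have h := toReal_exp (b := b) n (fun c => (b ^ c) ^ 2) (fun c => by positivity)
  rw [h, moment2 hb1]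
  rw [ENNReal.toReal_add (by finiteness) (by finiteness),
    ENNReal.toReal_add (by finiteness) (by finiteness)]
  rw [ENNReal.toReal_mul, ENNReal.toReal_mul, ENNReal.toReal_mul,
    ENNReal.toReal_ofReal (by linarith), ENNReal.toReal_ofReal (by linarith),
    ENNReal.toReal_one]
  simp
  ring
end realsums

section variance
variable {b : ℝ}

lemma choose_two_real (n : ℕ) : 2 * ((n.choose 2 : ℕ) : ℝ) = n * (n - 1) := by
  induction n with
  | zero => simp
  | succ n ih =>
    rw [Nat.choose_succ_succ]
    push_cast [Nat.choose_one_right]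
    push_cast at ih
    nlinarith [ih]

lemma exp_dev (hb : 1 < b) (n : ℕ) :
    ∑ c ∈ Finset.range (n+1), ((morris b n) c).toReal * ((b ^ c - 1) / (b - 1) - n) = 0 := by
  have hd : b - 1 ≠ 0 := by linarith
  have hterm : ∀ c, ((morris b n) c).toReal * ((b ^ c - 1) / (b - 1) - n)
      = (((morris b n) c).toReal * b ^ c - (1 + (b - 1) * n) * ((morris b n) c).toReal)
        / (b - 1) := by
    intro c; field_simp; ring
  rw [Finset.sum_congr rfl fun c _ => hterm c, ← Finset.sum_div, Finset.sum_sub_distrib,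
    ← Finset.mul_sum, real_sum1 (le_of_lt hb), real_sum0]
  field_simp
  ring

lemma var_dev (hb : 1 < b) (n : ℕ) :
    ∑ c ∈ Finset.range (n+1), ((morris b n) c).toReal * ((b ^ c - 1) / (b - 1) - n) ^ 2
      = (b - 1) * ((n.choose 2 : ℕ) : ℝ) := by
  have hd : b - 1 ≠ 0 := by linarith
  have hterm : ∀ c, ((morris b n) c).toReal * ((b ^ c - 1) / (b - 1) - n) ^ 2
      = (((morris b n) c).toReal * (b ^ c) ^ 2
          - 2 * (1 + (b - 1) * n) * (((morris b n) c).toReal * b ^ c)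
          + (1 + (b - 1) * n) ^ 2 * ((morris b n) c).toReal) / (b - 1) ^ 2 := by
    intro c; field_simp; ring
  rw [Finset.sum_congr rfl fun c _ => hterm c, ← Finset.sum_div, Finset.sum_add_distrib,
    Finset.sum_sub_distrib, ← Finset.mul_sum, ← Finset.mul_sum,
    real_sum1 (le_of_lt hb), real_sum0, real_sum2 (le_of_lt hb)]
  have h2c := choose_two_real n
  field_simp
  nlinarith [h2c, sq_nonneg (b-1)]
end variance

lemma joint_apply (p q : PMF ℕ) (x y : ℕ) :
    (p.bind fun cI => q.map fun cD => (cI, cD)) (x, y) = p x * q y := by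
  rw [PMF.bind_apply]
  have inner : ∀ a, (q.map fun cD => (a, cD)) (x, y) = if a = x then q y else 0 := by
    intro a
    rw [PMF.map_apply]
    by_cases h : a = x
    · subst h
      rw [if_pos rfl, tsum_eq_single y]
      · simp
      · intro d hd
        apply if_neg
        simp only [Prod.mk.injEq, true_and]
        exact fun h => hd h.symm
    · rw [if_neg h]
      refine ENNReal.tsum_eq_zero.mpr fun d => ?_
      apply if_neg
      simp only [Prod.mk.injEq, not_and]
      exact fun hx => absurd hx.symm h
  simp only [inner, mul_ite, mul_zero]
  rw [tsum_eq_single x (fun b' hb' => by rw [if_neg hb'])]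
  rw [if_pos rfl]

lemma sum_prod_expand (s t : Finset ℕ) (w1 w2 u v : ℕ → ℝ) :
    ∑ x ∈ s, ∑ y ∈ t, (w1 x * w2 y) * (u x - v y) ^ 2
      = (∑ x ∈ s, w1 x * u x ^ 2) * (∑ y ∈ t, w2 y)
        + (∑ x ∈ s, w1 x) * (∑ y ∈ t, w2 y * v y ^ 2)
        - 2 * (∑ x ∈ s, w1 x * u x) * (∑ y ∈ t, w2 y * v y) := by
  have inner : ∀ x, ∑ y ∈ t, (w1 x * w2 y) * (u x - v y) ^ 2
      = (w1 x * u x ^ 2) * (∑ y ∈ t, w2 y) + w1 x * (∑ y ∈ t, w2 y * v y ^ 2)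
        - 2 * (w1 x * u x) * (∑ y ∈ t, w2 y * v y) := by
    intro x
    rw [Finset.mul_sum, Finset.mul_sum, Finset.mul_sum, ← Finset.sum_add_distrib,
      ← Finset.sum_sub_distrib]
    exact Finset.sum_congr rfl fun y _ => by ring
  rw [Finset.sum_congr rfl fun x _ => inner x, Finset.sum_sub_distrib,
    Finset.sum_add_distrib, ← Finset.sum_mul, ← Finset.sum_mul, ← Finset.sum_mul]
  have h2 : ∑ x ∈ s, 2 * (w1 x * u x) = 2 * ∑ x ∈ s, w1 x * u x := by
    rw [Finset.mul_sum]
  rw [h2]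

set_option maxHeartbeats 2000000 in
/-- Signed Morris counter: for `ε, δ ∈ (0,1)` and base `b = 1 + (εδ/2)²`, if
`C_I ~ morris(b, I)` and `C_D ~ morris(b, D)` are independent and
`ñ = [(b^{C_I} - b)/(b-1) + 1] - [(b^{C_D} - b)/(b-1) + 1]`, then with probability at
least `1 - δ`, `|ñ - (I - D)| ≤ ε (I + D)`. -/
theorem stmt_13 (ε δ : ℝ) (hε0 : 0 < ε) (hε1 : ε < 1) (hδ0 : 0 < δ) (hδ1 : δ < 1)
    (I D : ℕ) (b : ℝ) (hb : b = 1 + (ε * δ / 2) ^ 2) :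
    ENNReal.ofReal (1 - δ) ≤
      ((morris b I).bind fun cI => (morris b D).map fun cD => (cI, cD)).toMeasure
        {p : ℕ × ℕ |
          |(((b ^ p.1 - b) / (b - 1) + 1) - ((b ^ p.2 - b) / (b - 1) + 1))
              - ((I : ℝ) - (D : ℝ))|
            ≤ ε * ((I : ℝ) + (D : ℝ))} := by
  have hb1 : 1 < b := by
    have h1 : 0 < (ε * δ / 2) ^ 2 := by positivity
    linarith
  have hd0 : (0:ℝ) < b - 1 := by linarith
  set P : PMF (ℕ × ℕ) := (morris b I).bind fun cI => (morris b D).map fun cD => (cI, cD)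
    with hPdef
  set S : Set (ℕ × ℕ) := {p : ℕ × ℕ |
          |(((b ^ p.1 - b) / (b - 1) + 1) - ((b ^ p.2 - b) / (b - 1) + 1))
              - ((I : ℝ) - (D : ℝ))|
            ≤ ε * ((I : ℝ) + (D : ℝ))} with hSdef
  have hmS : MeasurableSet S := (Set.to_countable S).measurableSet
  have hest : ∀ x y : ℕ, (((b ^ x - b) / (b - 1) + 1) - ((b ^ y - b) / (b - 1) + 1))
      - ((I : ℝ) - (D : ℝ))
      = ((b ^ x - 1) / (b - 1) - I) - ((b ^ y - 1) / (b - 1) - D) := by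
    intro x y
    have : b - 1 ≠ 0 := ne_of_gt hd0
    field_simp
    ring
  have hcompl : P.toMeasure Sᶜ ≤ ENNReal.ofReal δ := by
    by_cases h0 : I = 0 ∧ D = 0
    · obtain ⟨hI, hD⟩ := h0
      subst hI; subst hD
      have hz : P.toMeasure Sᶜ = 0 := by
        rw [PMF.toMeasure_apply _ hmS.compl]
        refine ENNReal.tsum_eq_zero.mpr fun z => ?_
        by_cases hzS : z ∈ Sᶜ
        · rw [Set.indicator_of_mem hzS]
          rcases z with ⟨x, y⟩
          by_cases hx : x = 0
          · by_cases hy : y = 0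
            · exfalso
              apply hzS
              subst hx; subst hy
              simp only [hSdef, Set.mem_setOf_eq]
              norm_num
            · rw [hPdef, joint_apply, morris_zero_of_gt b (Nat.pos_of_ne_zero hy), mul_zero]
          · rw [hPdef, joint_apply, morris_zero_of_gt b (Nat.pos_of_ne_zero hx), zero_mul]
        · rw [Set.indicator_of_notMem hzS]
      rw [hz]
      exact zero_le
    · have hIDn : 0 < I + D := by omega
      have hID : (0:ℝ) < (I:ℝ) + (D:ℝ) := by
        have : (0:ℝ) < ((I + D : ℕ) : ℝ) := by exact_mod_cast hIDn
        push_cast at this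
        linarith
      set t : ℝ := ε * ((I:ℝ) + (D:ℝ)) with htdef
      have ht : 0 < t := mul_pos hε0 hID
      set u : ℕ → ℝ := fun x => (b ^ x - 1) / (b - 1) - (I:ℝ) with hudef
      set v : ℕ → ℝ := fun y => (b ^ y - 1) / (b - 1) - (D:ℝ) with hvdef
      set g : ℕ × ℕ → ℝ := fun z => u z.1 - v z.2 with hgdef
      rw [PMF.toMeasure_apply _ hmS.compl]
      have hpt : ∀ z : ℕ × ℕ, Sᶜ.indicator (⇑P) z ≤
          ENNReal.ofReal ((g z) ^ 2 / t ^ 2) * P z := by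
        intro z
        by_cases hzS : z ∈ Sᶜ
        · rw [Set.indicator_of_mem hzS]
          have hgt : t < |g z| := by
            have h1 : z ∉ S := hzS
            simp only [hSdef, Set.mem_setOf_eq, not_le] at h1
            rwa [hest z.1 z.2] at h1
          have h1 : (1:ℝ≥0∞) ≤ ENNReal.ofReal ((g z) ^ 2 / t ^ 2) := by
            rw [ENNReal.one_le_ofReal, one_le_div (by positivity)]
            nlinarith [abs_nonneg (g z), sq_abs (g z)]
          calc P z = 1 * P z := (one_mul _).symm
            _ ≤ _ := mul_le_mul_left h1 _
        · rw [Set.indicator_of_notMem hzS]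
          exact zero_le
      refine le_trans (ENNReal.tsum_le_tsum hpt) ?_
      have hvanish : ∀ z : ℕ × ℕ, z ∉ Finset.range (I+1) ×ˢ Finset.range (D+1) →
          ENNReal.ofReal ((g z) ^ 2 / t ^ 2) * P z = 0 := by
        intro z hz
        rcases z with ⟨x, y⟩
        simp only [Finset.mem_product, Finset.mem_range, not_and_or, not_lt] at hz
        rw [hPdef, joint_apply]
        rcases hz with hx | hy
        · rw [morris_zero_of_gt b (n := I) (c := x) (by omega), zero_mul, mul_zero]
        · rw [morris_zero_of_gt b (n := D) (c := y) (by omega), mul_zero, mul_zero]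
      rw [tsum_eq_sum hvanish]
      have hterm : ∀ z ∈ Finset.range (I+1) ×ˢ Finset.range (D+1),
          ENNReal.ofReal ((g z) ^ 2 / t ^ 2) * P z
            = ENNReal.ofReal (((morris b I) z.1).toReal * ((morris b D) z.2).toReal
                * ((g z) ^ 2 / t ^ 2)) := by
        intro z _
        rcases z with ⟨x, y⟩
        rw [hPdef, joint_apply,
          ← ENNReal.ofReal_toReal (ENNReal.mul_ne_top (PMF.apply_ne_top (morris b I) x)
            (PMF.apply_ne_top (morris b D) y)),
          ← ENNReal.ofReal_mul (by positivity)]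
        congr 1
        rw [ENNReal.toReal_mul]
        ring
      rw [Finset.sum_congr rfl hterm,
        ← ENNReal.ofReal_sum_of_nonneg (fun z _ => by positivity)]
      apply ENNReal.ofReal_le_ofReal
      rw [Finset.sum_product]
      have hexpand : ∀ x ∈ Finset.range (I+1), ∀ y ∈ Finset.range (D+1),
          ((morris b I) x).toReal * ((morris b D) y).toReal * ((g (x, y)) ^ 2 / t ^ 2)
          = (1 / t ^ 2) * ((((morris b I) x).toReal * ((morris b D) y).toReal)
              * (u x - v y) ^ 2) := by
        intro x _ y _
        rw [hgdef]
        field_simp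
      calc ∑ x ∈ Finset.range (I+1), ∑ y ∈ Finset.range (D+1),
            ((morris b I) x).toReal * ((morris b D) y).toReal * ((g (x, y)) ^ 2 / t ^ 2)
          = (1 / t ^ 2) * ∑ x ∈ Finset.range (I+1), ∑ y ∈ Finset.range (D+1),
              (((morris b I) x).toReal * ((morris b D) y).toReal) * (u x - v y) ^ 2 := by
            rw [Finset.mul_sum]
            refine Finset.sum_congr rfl fun x hx => ?_
            rw [Finset.mul_sum]
            exact Finset.sum_congr rfl fun y hy => hexpand x hx y hy
        _ = (1 / t ^ 2) * ((b - 1) * ((I.choose 2 : ℕ) : ℝ)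
              + (b - 1) * ((D.choose 2 : ℕ) : ℝ)) := by
            rw [sum_prod_expand]
            have e1 : ∑ x ∈ Finset.range (I+1), ((morris b I) x).toReal * u x ^ 2
                = (b - 1) * ((I.choose 2 : ℕ) : ℝ) := var_dev hb1 I
            have e2 : ∑ y ∈ Finset.range (D+1), ((morris b D) y).toReal * v y ^ 2
                = (b - 1) * ((D.choose 2 : ℕ) : ℝ) := var_dev hb1 D
            have e3 : ∑ x ∈ Finset.range (I+1), ((morris b I) x).toReal * u x = 0 :=
              exp_dev hb1 I
            have e4 : ∑ y ∈ Finset.range (D+1), ((morris b D) y).toReal * v y = 0 :=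
              exp_dev hb1 D
            rw [e1, e2, e3, e4, real_sum0, real_sum0]
            ring
        _ ≤ δ := by
            have hcI := choose_two_real I
            have hcD := choose_two_real D
            have ht2 : t ^ 2 = ε ^ 2 * ((I:ℝ) + (D:ℝ)) ^ 2 := by rw [htdef]; ring
            rw [div_mul_eq_mul_div, div_le_iff₀ (by positivity), one_mul]
            have hI0 : (0:ℝ) ≤ (I:ℝ) := Nat.cast_nonneg I
            have hD0 : (0:ℝ) ≤ (D:ℝ) := Nat.cast_nonneg D
            have hI2 : ((I.choose 2 : ℕ) : ℝ) * 2 ≤ (I:ℝ) ^ 2 := by nlinarith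
            have hD2 : ((D.choose 2 : ℕ) : ℝ) * 2 ≤ (D:ℝ) ^ 2 := by nlinarith
            rw [hb, ht2]
            have hA : ((I.choose 2 : ℕ) : ℝ) + ((D.choose 2 : ℕ) : ℝ)
                ≤ ((I:ℝ) + (D:ℝ)) ^ 2 / 2 := by nlinarith [mul_nonneg hI0 hD0]
            have hB : (1 + (ε * δ / 2) ^ 2 - 1) = ε ^ 2 * δ ^ 2 / 4 := by ring
            rw [hB]
            have hC : ε ^ 2 * δ ^ 2 / 4 * (((I.choose 2 : ℕ) : ℝ) + ((D.choose 2 : ℕ) : ℝ))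
                ≤ ε ^ 2 * δ ^ 2 / 4 * (((I:ℝ) + (D:ℝ)) ^ 2 / 2) :=
              mul_le_mul_of_nonneg_left hA (by positivity)
            have h8 : δ ^ 2 ≤ 8 * δ := by nlinarith
            have h9 : δ ^ 2 * (ε ^ 2 * ((I:ℝ) + (D:ℝ)) ^ 2)
                ≤ 8 * δ * (ε ^ 2 * ((I:ℝ) + (D:ℝ)) ^ 2) :=
              mul_le_mul_of_nonneg_right h8 (by positivity)
            linarith
  have hsum : P.toMeasure S + P.toMeasure Sᶜ = 1 := by
    rw [measure_add_measure_compl hmS, measure_univ]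
  calc ENNReal.ofReal (1 - δ)
      = 1 - ENNReal.ofReal δ := by
        rw [ENNReal.ofReal_sub 1 (le_of_lt hδ0), ENNReal.ofReal_one]
    _ ≤ 1 - P.toMeasure Sᶜ := tsub_le_tsub_left hcompl 1
    _ = P.toMeasure S := by
        rw [← hsum, ENNReal.add_sub_cancel_right (measure_ne_top _ _)]
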